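/- Let ⟨ , ⟩ be a smooth symmetric two-tensor on U and let ∇ be a connection on vector fields of U that is compatible with ⟨ , ⟩ and torsion-free. Then the Leibniz coboundary of the two-tensor ω = ⟨ , ⟩ satisfies, for all smooth vector fields X, Y, Z on U, dω(X⊗Y⊗Z) = 2⟨Y, ∇_X Z⟩. -/
import Mathlib


open scoped BigOperators

/-- Action of a vector field on a function: `X(f)(z) = Df_z(X(z))`. -/
noncomputable def vfApply {n : ℕ} (f : (Fin n → ℝ) → ℝ)
    (X : (Fin n → ℝ) → (Fin n → ℝ)) : (Fin n → ℝ) → ℝ :=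
  fun z => fderiv ℝ f z (X z)

/-- Lie bracket of vector fields: `[X,Y](z) = DY_z(X(z)) − DX_z(Y(z))`. -/
noncomputable def vfBracket {n : ℕ} (X Y : (Fin n → ℝ) → (Fin n → ℝ)) :
    (Fin n → ℝ) → (Fin n → ℝ) :=
  fun z => fderiv ℝ Y z (X z) - fderiv ℝ X z (Y z)

/-- A two-tensor `ω = Σ a_{pq} dx^p ⊗ dx^q` applied to two vector fields:
`ω(X⊗Y)(z) = Σ_{p,q} a_{pq}(z) X^p(z) Y^q(z)`. -/
noncomputable def tens2 {n : ℕ} (a : Fin n → Fin n → (Fin n → ℝ) → ℝ)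
    (X Y : (Fin n → ℝ) → (Fin n → ℝ)) : (Fin n → ℝ) → ℝ :=
  fun z => ∑ p, ∑ q, a p q z * X z p * Y z q

/-- Leibniz coboundary of a two-tensor:
`dω(X₁⊗X₂⊗X₃) = X₁(ω(X₂⊗X₃)) − X₂(ω(X₁⊗X₃)) + X₃(ω(X₁⊗X₂))
  − ω([X₁,X₂]⊗X₃) + ω([X₁,X₃]⊗X₂) + ω(X₁⊗[X₂,X₃])`. -/
noncomputable def d2 {n : ℕ} (a : Fin n → Fin n → (Fin n → ℝ) → ℝ)
    (X₁ X₂ X₃ : (Fin n → ℝ) → (Fin n → ℝ)) : (Fin n → ℝ) → ℝ :=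
  fun z =>
    vfApply (tens2 a X₂ X₃) X₁ z - vfApply (tens2 a X₁ X₃) X₂ z
      + vfApply (tens2 a X₁ X₂) X₃ z
      - tens2 a (vfBracket X₁ X₂) X₃ z + tens2 a (vfBracket X₁ X₃) X₂ z
      + tens2 a X₁ (vfBracket X₂ X₃) z

/-- if `⟨ , ⟩ = Σ g_{pq} dx^p ⊗ dx^q` is a smooth symmetric two-tensor on
`U` and `∇` is a connection on vector fields of `U` compatible with `⟨ , ⟩` and
torsion-free, then the Leibniz coboundary of `ω = ⟨ , ⟩` satisfies
`dω(X⊗Y⊗Z) = 2⟨Y, ∇_X Z⟩`. -/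
theorem leibnizD_metric_connection (n : ℕ) (hn : 1 ≤ n)
    (U : Set (Fin n → ℝ)) (hU : IsOpen U) (hUne : U.Nonempty)
    (g : Fin n → Fin n → (Fin n → ℝ) → ℝ)
    (hg : ∀ p q, ContDiffOn ℝ (⊤ : ℕ∞) (g p q) U)
    (hsym : ∀ p q, ∀ z ∈ U, g p q z = g q p z)
    (nabla : ((Fin n → ℝ) → (Fin n → ℝ)) → ((Fin n → ℝ) → (Fin n → ℝ)) →
      ((Fin n → ℝ) → (Fin n → ℝ)))
    -- `∇` assigns to smooth vector fields a smooth vector field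
    (hnab_smooth : ∀ X Y, ContDiffOn ℝ (⊤ : ℕ∞) X U → ContDiffOn ℝ (⊤ : ℕ∞) Y U →
      ContDiffOn ℝ (⊤ : ℕ∞) (nabla X Y) U)
    -- `∇` is ℝ-bilinear
    (hadd_left : ∀ X X' Y, ContDiffOn ℝ (⊤ : ℕ∞) X U → ContDiffOn ℝ (⊤ : ℕ∞) X' U →
      ContDiffOn ℝ (⊤ : ℕ∞) Y U →
      ∀ z ∈ U, nabla (X + X') Y z = nabla X Y z + nabla X' Y z)
    (hadd_right : ∀ X Y Y', ContDiffOn ℝ (⊤ : ℕ∞) X U → ContDiffOn ℝ (⊤ : ℕ∞) Y U →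
      ContDiffOn ℝ (⊤ : ℕ∞) Y' U →
      ∀ z ∈ U, nabla X (Y + Y') z = nabla X Y z + nabla X Y' z)
    (hconst_smul : ∀ (c : ℝ) (X Y), ContDiffOn ℝ (⊤ : ℕ∞) X U →
      ContDiffOn ℝ (⊤ : ℕ∞) Y U →
      ∀ z ∈ U, nabla (fun w => c • X w) Y z = c • nabla X Y z ∧
        nabla X (fun w => c • Y w) z = c • nabla X Y z)
    -- `∇_{fX} Y = f ∇_X Y` for smooth `f`
    (hsmul_left : ∀ (f : (Fin n → ℝ) → ℝ) (X Y), ContDiffOn ℝ (⊤ : ℕ∞) f U →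
      ContDiffOn ℝ (⊤ : ℕ∞) X U → ContDiffOn ℝ (⊤ : ℕ∞) Y U →
      ∀ z ∈ U, nabla (fun w => f w • X w) Y z = f z • nabla X Y z)
    -- `∇_X (fY) = X(f)·Y + f ∇_X Y` for smooth `f`
    (hsmul_right : ∀ (f : (Fin n → ℝ) → ℝ) (X Y), ContDiffOn ℝ (⊤ : ℕ∞) f U →
      ContDiffOn ℝ (⊤ : ℕ∞) X U → ContDiffOn ℝ (⊤ : ℕ∞) Y U →
      ∀ z ∈ U, nabla X (fun w => f w • Y w) z
        = fderiv ℝ f z (X z) • Y z + f z • nabla X Y z)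
    -- compatibility: `X(⟨Y,Z⟩) = ⟨∇_X Y, Z⟩ + ⟨Y, ∇_X Z⟩`
    (hcompat : ∀ X Y Z, ContDiffOn ℝ (⊤ : ℕ∞) X U → ContDiffOn ℝ (⊤ : ℕ∞) Y U →
      ContDiffOn ℝ (⊤ : ℕ∞) Z U →
      ∀ z ∈ U, vfApply (tens2 g Y Z) X z
        = tens2 g (nabla X Y) Z z + tens2 g Y (nabla X Z) z)
    -- torsion-free: `[X,Y] = ∇_X Y − ∇_Y X`
    (htf : ∀ X Y, ContDiffOn ℝ (⊤ : ℕ∞) X U → ContDiffOn ℝ (⊤ : ℕ∞) Y U →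
      ∀ z ∈ U, vfBracket X Y z = nabla X Y z - nabla Y X z) :
    ∀ X Y Z, ContDiffOn ℝ (⊤ : ℕ∞) X U → ContDiffOn ℝ (⊤ : ℕ∞) Y U →
      ContDiffOn ℝ (⊤ : ℕ∞) Z U →
      ∀ z ∈ U, d2 g X Y Z z = 2 * tens2 g Y (nabla X Z) z := by
  intro X Y Z hX hY hZ z hz
  have Tsym : ∀ A B : (Fin n → ℝ) → (Fin n → ℝ), tens2 g A B z = tens2 g B A z := by
    intro A B
    simp only [tens2]
    rw [Finset.sum_comm]
    refine Finset.sum_congr rfl fun p _ => Finset.sum_congr rfl fun q _ => ?_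
    rw [hsym q p z hz]; ring
  have Tb : ∀ A B C, ContDiffOn ℝ (⊤ : ℕ∞) A U → ContDiffOn ℝ (⊤ : ℕ∞) B U →
      tens2 g (vfBracket A B) C z = tens2 g (nabla A B) C z - tens2 g (nabla B A) C z := by
    intro A B C hA hB
    simp only [tens2, htf A B hA hB z hz, Pi.sub_apply, sub_mul, mul_sub,
      Finset.sum_sub_distrib]
  simp only [d2, hcompat X Y Z hX hY hZ z hz, hcompat Y X Z hY hX hZ z hz,
    hcompat Z X Y hZ hX hY z hz, Tb X Y Z hX hY, Tb X Z Y hX hZ, Tb Y Z X hY hZ,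
    Tsym X (vfBracket Y Z), Tb Y Z X hY hZ, Tsym (nabla X Z) Y]
  rw [Tsym X (nabla Y Z), Tsym X (nabla Z Y)]
  ring
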